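/- Let n ≥ 1 and let f̃ : ℝ^{n×n} → ℝ be differentiable, positive, invariant under orthogonal conjugation (f̃(QZQᵀ) = f̃(Z) for all Q ∈ O(n), Z ∈ ℝ^{n×n}) and under transposition (f̃(Zᵀ) = f̃(Z) for all Z). Define G : SO(n) → ℝ^{n×n} by G(Z) = (1/f̃(Z))·skew((∇f̃(Z))ᵀZ). Then for all R_i, R_j, Z ∈ SO(n) and every n×n real matrix E: ⟨G(R_j·R_iᵀ·Zᵀ·R_i·R_jᵀ), R_j·E·R_jᵀ⟩ = −⟨G(Z), R_i·E·R_iᵀ⟩, where ⟨A,B⟩ = trace(AᵀB). -/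

import Mathlib

open Matrix

noncomputable section

attribute [local instance] Matrix.normedAddCommGroup Matrix.normedSpace

/-- The special orthogonal group `SO(n)`, as a set of `n × n` real matrices. -/
def SO (n : ℕ) : Set (Matrix (Fin n) (Fin n) ℝ) :=
  {A | A * Aᵀ = 1 ∧ A.det = 1}

/-- The orthogonal group `O(n)`, as a set of `n × n` real matrices. -/
def ON (n : ℕ) : Set (Matrix (Fin n) (Fin n) ℝ) :=
  {A | A * Aᵀ = 1}

/-- The skew-symmetric part `(A - Aᵀ)/2` of a square matrix. -/
def skewPart {n : ℕ} (A : Matrix (Fin n) (Fin n) ℝ) : Matrix (Fin n) (Fin n) ℝ :=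
  (2 : ℝ)⁻¹ • (A - Aᵀ)

/-- The Euclidean (Frobenius) gradient of `f : ℝ^{n×n} → ℝ`. -/
def grad {n : ℕ} (f : Matrix (Fin n) (Fin n) ℝ → ℝ) (Z : Matrix (Fin n) (Fin n) ℝ) :
    Matrix (Fin n) (Fin n) ℝ :=
  Matrix.of fun i j => fderiv ℝ f Z (Matrix.single i j 1)

/-- The score map `G(Z) = (1 / f(Z)) · skew((∇f(Z))ᵀ Z)`. -/
def scoreG {n : ℕ} (f : Matrix (Fin n) (Fin n) ℝ → ℝ) (Z : Matrix (Fin n) (Fin n) ℝ) :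
    Matrix (Fin n) (Fin n) ℝ :=
  (f Z)⁻¹ • skewPart ((grad f Z)ᵀ * Z)

/-- The Frobenius inner product `⟨A, B⟩ = trace(Aᵀ B)`. -/
def frobInner {n : ℕ} (A B : Matrix (Fin n) (Fin n) ℝ) : ℝ :=
  (Aᵀ * B).trace

section aux
variable {n : ℕ}

lemma frob_sum (A B : Matrix (Fin n) (Fin n) ℝ) :
    frobInner A B = ∑ i, ∑ j, A i j * B i j := by
  simp only [frobInner, Matrix.trace, Matrix.diag, Matrix.mul_apply, Matrix.transpose_apply]
  exact Finset.sum_comm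

lemma frob_stdBasis (A : Matrix (Fin n) (Fin n) ℝ) (i j : Fin n) :
    frobInner A (Matrix.single i j 1) = A i j := by
  rw [frob_sum]
  simp [Matrix.single, Matrix.of_apply, mul_ite, ite_and, Finset.sum_ite_eq']

lemma frob_ext {A B : Matrix (Fin n) (Fin n) ℝ}
    (h : ∀ H, frobInner A H = frobInner B H) : A = B := by
  ext i j
  have := h (Matrix.single i j 1)
  rwa [frob_stdBasis, frob_stdBasis] at this

/-- conjugation `X ↦ Q X Qᵀ` as a continuous linear map. -/
def conjCLM (Q : Matrix (Fin n) (Fin n) ℝ) :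
    Matrix (Fin n) (Fin n) ℝ →L[ℝ] Matrix (Fin n) (Fin n) ℝ :=
  LinearMap.toContinuousLinearMap
    { toFun := fun X => Q * X * Qᵀ
      map_add' := by intro X Y; simp [Matrix.mul_add, Matrix.add_mul]
      map_smul' := by intro c X; simp [Matrix.mul_smul, Matrix.smul_mul] }

def transCLM : Matrix (Fin n) (Fin n) ℝ →L[ℝ] Matrix (Fin n) (Fin n) ℝ :=
  LinearMap.toContinuousLinearMap
    { toFun := fun X => Xᵀ
      map_add' := by intro X Y; simp
      map_smul' := by intro c X; simp }

@[simp] lemma conjCLM_apply (Q X : Matrix (Fin n) (Fin n) ℝ) : conjCLM Q X = Q * X * Qᵀ := rfl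
@[simp] lemma transCLM_apply (X : Matrix (Fin n) (Fin n) ℝ) : transCLM X = Xᵀ := rfl

end aux

section gradlem
variable {n : ℕ} (f : Matrix (Fin n) (Fin n) ℝ → ℝ)

lemma fderiv_eq_frob (Z H : Matrix (Fin n) (Fin n) ℝ) :
    fderiv ℝ f Z H = frobInner (grad f Z) H := by
  rw [frob_sum]
  have hH : H = ∑ i, ∑ j, Matrix.single i j (H i j) :=
    Matrix.matrix_eq_sum_single H
  conv_lhs => rw [hH]
  rw [map_sum]
  refine Finset.sum_congr rfl fun i _ => ?_
  rw [map_sum]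
  refine Finset.sum_congr rfl fun j _ => ?_
  have : Matrix.single i j (H i j) = (H i j) • Matrix.single i j (1:ℝ) := by
    simp
  rw [this, _root_.map_smul]
  simp [grad, mul_comm]

lemma frob_conj (A Q H : Matrix (Fin n) (Fin n) ℝ) :
    frobInner A (Qᵀ * H * Q) = frobInner (Q * A * Qᵀ) H := by
  simp only [frobInner, Matrix.transpose_mul, Matrix.transpose_transpose]
  rw [Matrix.mul_assoc, ← Matrix.trace_mul_cycle]
  simp [Matrix.mul_assoc]

lemma grad_conj (hf : Differentiable ℝ f)
    (Q : Matrix (Fin n) (Fin n) ℝ) (hQ : Q * Qᵀ = 1)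
    (hspec : ∀ Z, f (Q * Z * Qᵀ) = f Z) (Z : Matrix (Fin n) (Fin n) ℝ) :
    grad f (Q * Z * Qᵀ) = Q * grad f Z * Qᵀ := by
  have hQ' : Qᵀ * Q = 1 := mul_eq_one_comm.mp hQ
  have hcomp : f ∘ (conjCLM Q) = f := funext fun X => hspec X
  have key : ∀ H, fderiv ℝ f (Q * Z * Qᵀ) (Q * H * Qᵀ) = fderiv ℝ f Z H := by
    intro H
    conv_rhs => rw [← hcomp]
    erw [fderiv_comp Z (hf.differentiableAt) ((conjCLM Q).differentiableAt),
      ContinuousLinearMap.fderiv]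
    rfl
  apply frob_ext
  intro H
  have h2 : Q * (Qᵀ * H * Q) * Qᵀ = H := by
    calc Q * (Qᵀ * H * Q) * Qᵀ = (Q * Qᵀ) * H * (Q * Qᵀ) := by
          simp only [Matrix.mul_assoc]
      _ = H := by rw [hQ]; simp
  calc frobInner (grad f (Q * Z * Qᵀ)) H
      = fderiv ℝ f (Q * Z * Qᵀ) H := (fderiv_eq_frob f _ H).symm
    _ = fderiv ℝ f (Q * Z * Qᵀ) (Q * (Qᵀ * H * Q) * Qᵀ) := by rw [h2]
    _ = fderiv ℝ f Z (Qᵀ * H * Q) := key _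
    _ = frobInner (grad f Z) (Qᵀ * H * Q) := fderiv_eq_frob f _ _
    _ = frobInner (Q * grad f Z * Qᵀ) H := frob_conj _ _ _

lemma grad_transpose (hf : Differentiable ℝ f)
    (htrans : ∀ Z, f Zᵀ = f Z) (Z : Matrix (Fin n) (Fin n) ℝ) :
    grad f Zᵀ = (grad f Z)ᵀ := by
  have hcomp : f ∘ (transCLM (n := n)) = f := funext fun X => htrans X
  have key : ∀ H : Matrix (Fin n) (Fin n) ℝ, fderiv ℝ f Zᵀ Hᵀ = fderiv ℝ f Z H := by
    intro H
    conv_rhs => rw [← hcomp]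
    erw [fderiv_comp Z (hf.differentiableAt) ((transCLM (n := n)).differentiableAt),
      ContinuousLinearMap.fderiv]
    rfl
  ext i j
  have h1 : (Matrix.single j i (1:ℝ))ᵀ = Matrix.single i j (1:ℝ) := by
    ext a b
    simp [Matrix.single, Matrix.transpose_apply, and_comm]
  show fderiv ℝ f Zᵀ (Matrix.single i j 1) = grad f Z j i
  rw [← h1, key]
  rfl

end gradlem

section mainaux
variable {n : ℕ} (f : Matrix (Fin n) (Fin n) ℝ → ℝ)

lemma grad_comm (hf : Differentiable ℝ f)
    (hspec : ∀ Q ∈ ON n, ∀ Z, f (Q * Z * Qᵀ) = f Z)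
    (Z : Matrix (Fin n) (Fin n) ℝ) (hZ : Z * Zᵀ = 1) :
    grad f Z * Z = Z * grad f Z := by
  have hZ' : Zᵀ * Z = 1 := mul_eq_one_comm.mp hZ
  have h := grad_conj f hf Z hZ (hspec Z hZ) Z
  have hZZZ : Z * Z * Zᵀ = Z := by rw [Matrix.mul_assoc, hZ, Matrix.mul_one]
  rw [hZZZ] at h
  calc grad f Z * Z = (Z * grad f Z * Zᵀ) * Z := by rw [← h]
    _ = Z * grad f Z * (Zᵀ * Z) := by simp only [Matrix.mul_assoc]
    _ = Z * grad f Z := by rw [hZ', Matrix.mul_one]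

lemma skew_conj (Q A : Matrix (Fin n) (Fin n) ℝ) (hQ : Q * Qᵀ = 1) :
    skewPart (Q * A * Qᵀ) = Q * skewPart A * Qᵀ := by
  simp only [skewPart, Matrix.transpose_mul, Matrix.transpose_transpose,
    Matrix.mul_smul, Matrix.smul_mul, Matrix.mul_sub, Matrix.sub_mul, Matrix.mul_assoc]


end mainaux

theorem stmt10 {n : ℕ} (hn : 1 ≤ n) (f : Matrix (Fin n) (Fin n) ℝ → ℝ)
    (hf : Differentiable ℝ f) (hpos : ∀ Z, 0 < f Z)
    (hspec : ∀ Q ∈ ON n, ∀ Z, f (Q * Z * Qᵀ) = f Z)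
    (htrans : ∀ Z, f Zᵀ = f Z) :
    ∀ Ri ∈ SO n, ∀ Rj ∈ SO n, ∀ Z ∈ SO n, ∀ E : Matrix (Fin n) (Fin n) ℝ,
      frobInner (scoreG f (Rj * Riᵀ * Zᵀ * Ri * Rjᵀ)) (Rj * E * Rjᵀ) =
        -frobInner (scoreG f Z) (Ri * E * Riᵀ) := by

  rintro Ri ⟨hRi1, -⟩ Rj ⟨hRj1, -⟩ Z ⟨hZ1, -⟩ E
  have hRi2 : Riᵀ * Ri = 1 := mul_eq_one_comm.mp hRi1
  have hRj2 : Rjᵀ * Rj = 1 := mul_eq_one_comm.mp hRj1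
  have hZ2 : Zᵀ * Z = 1 := mul_eq_one_comm.mp hZ1
  set Q : Matrix (Fin n) (Fin n) ℝ := Rj * Riᵀ with hQdef
  have hQ : Q * Qᵀ = 1 := by
    simp only [hQdef, Matrix.transpose_mul, Matrix.transpose_transpose]
    calc Rj * Riᵀ * (Ri * Rjᵀ) = Rj * (Riᵀ * Ri) * Rjᵀ := by simp only [Matrix.mul_assoc]
      _ = 1 := by rw [hRi2, Matrix.mul_one, hRj1]
  have hW : Rj * Riᵀ * Zᵀ * Ri * Rjᵀ = Q * Zᵀ * Qᵀ := by
    simp only [hQdef, Matrix.transpose_mul, Matrix.transpose_transpose, Matrix.mul_assoc]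
  set D := grad f Z with hD
  -- commutation facts
  have hDZ : D * Z = Z * D := grad_comm f hf hspec Z hZ1
  have hZtD : Zᵀ * D = D * Zᵀ := by
    calc Zᵀ * D = Zᵀ * D * (Z * Zᵀ) := by rw [hZ1, Matrix.mul_one]
      _ = Zᵀ * (D * Z) * Zᵀ := by simp only [Matrix.mul_assoc]
      _ = Zᵀ * (Z * D) * Zᵀ := by rw [hDZ]
      _ = (Zᵀ * Z) * D * Zᵀ := by simp only [Matrix.mul_assoc]
      _ = D * Zᵀ := by rw [hZ2, Matrix.one_mul]
  have hDtZ : Dᵀ * Z = Z * Dᵀ := by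
    have := congrArg Matrix.transpose hZtD
    simpa only [Matrix.transpose_mul, Matrix.transpose_transpose] using this
  -- grad and f at W
  have hgW : grad f (Q * Zᵀ * Qᵀ) = Q * Dᵀ * Qᵀ := by
    rw [grad_conj f hf Q hQ (hspec Q hQ) Zᵀ, grad_transpose f hf htrans]
  have hfW : f (Q * Zᵀ * Qᵀ) = f Z := by rw [hspec Q hQ, htrans]
  -- skew identity
  have hskew : skewPart (D * Zᵀ) = -skewPart (Dᵀ * Z) := by
    simp only [skewPart, Matrix.transpose_mul, Matrix.transpose_transpose, ← smul_neg,
      neg_sub]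
    congr 1
    rw [hDtZ, ← hZtD]
  -- score at W
  have hscoreW : scoreG f (Q * Zᵀ * Qᵀ) = -(Q * scoreG f Z * Qᵀ) := by
    rw [scoreG, hgW, hfW]
    have h1 : (Q * Dᵀ * Qᵀ)ᵀ * (Q * Zᵀ * Qᵀ) = Q * (D * Zᵀ) * Qᵀ := by
      have hQ' : Qᵀ * Q = 1 := mul_eq_one_comm.mp hQ
      simp only [Matrix.transpose_mul, Matrix.transpose_transpose, Matrix.mul_assoc]
      rw [show Qᵀ * (Q * (Zᵀ * Qᵀ)) = Zᵀ * Qᵀ by rw [← Matrix.mul_assoc, hQ', Matrix.one_mul]]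
    rw [h1, skew_conj _ _ hQ, hskew, scoreG]
    simp only [Matrix.mul_smul, Matrix.smul_mul, Matrix.mul_neg, Matrix.neg_mul, smul_neg]
    rfl
  rw [hW, hscoreW]
  -- final trace computation
  have hfin : ∀ G : Matrix (Fin n) (Fin n) ℝ,
      frobInner (Q * G * Qᵀ) (Rj * E * Rjᵀ) = frobInner G (Ri * E * Riᵀ) := by
    intro G
    simp only [frobInner, Matrix.transpose_mul, Matrix.transpose_transpose]
    have hQtRj : Qᵀ * Rj = Ri := by
      simp only [hQdef, Matrix.transpose_mul, Matrix.transpose_transpose]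
      rw [Matrix.mul_assoc, hRj2, Matrix.mul_one]
    have hRjtQ : Rjᵀ * Q = Riᵀ := by
      simp only [hQdef]
      rw [← Matrix.mul_assoc, hRj2, Matrix.one_mul]
    simp only [Matrix.mul_assoc]
    rw [Matrix.trace_mul_comm]
    simp only [Matrix.mul_assoc]
    rw [show ∀ X, Qᵀ * (Rj * X) = Ri * X from fun X => by
        rw [← Matrix.mul_assoc, hQtRj], hRjtQ]
  have : frobInner (-(Q * scoreG f Z * Qᵀ)) (Rj * E * Rjᵀ)
      = -frobInner (Q * scoreG f Z * Qᵀ) (Rj * E * Rjᵀ) := by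
    simp [frobInner]
  rw [this, hfin]
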